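/- arXiv:1309.7528 — 2 statements merged into one kernel-verified Lean document; each statement's English description precedes it below -/
import Mathlib

section
/- Fix θ' ∈ (−1,0)∪(0,∞). The function θ ↦ θ·H_{1+θ,1+θ'}(X|Y), extended by the value 0 at θ=0, is concave on (−1,∞), and it is strictly concave on (−1,∞) if and only if V(X|Y) > 0. -/
open Real Filter

section Aux
variable {ι : Type*}

private lemma aux_hasDerivAt_sum (s : Finset ι) (w z : ι → ℝ) (θ : ℝ) :
    HasDerivAt (fun t => ∑ i ∈ s, w i * Real.exp (t * z i))
      (∑ i ∈ s, (w i * z i) * Real.exp (θ * z i)) θ := by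
  apply HasDerivAt.fun_sum
  intro i _
  have h : HasDerivAt (fun t : ℝ => t * z i) (z i) θ := hasDerivAt_mul_const (z i)
  have h2 := (h.exp).const_mul (w i)
  exact h2.congr_deriv (by ring)

private lemma aux_concave (s : Finset ι) (hs : s.Nonempty) (w z : ι → ℝ)
    (hw : ∀ i ∈ s, 0 < w i) :
    ConcaveOn ℝ (Set.Ioi (-1:ℝ)) (fun θ => -Real.log (∑ i ∈ s, w i * Real.exp (θ * z i)))
    ∧ ((∃ a ∈ s, ∃ b ∈ s, z a ≠ z b) →
      StrictConcaveOn ℝ (Set.Ioi (-1:ℝ))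
        (fun θ => -Real.log (∑ i ∈ s, w i * Real.exp (θ * z i)))) := by
  set G : ℝ → ℝ := fun θ => ∑ i ∈ s, w i * Real.exp (θ * z i) with hG
  set G1 : ℝ → ℝ := fun θ => ∑ i ∈ s, (w i * z i) * Real.exp (θ * z i) with hG1
  set G2 : ℝ → ℝ := fun θ => ∑ i ∈ s, (w i * z i * z i) * Real.exp (θ * z i) with hG2
  set f : ℝ → ℝ := fun θ => -Real.log (G θ) with hf
  have hGpos : ∀ θ, 0 < G θ := fun θ =>
    Finset.sum_pos (fun i hi => mul_pos (hw i hi) (Real.exp_pos _)) hs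
  have hGd : ∀ θ, HasDerivAt G (G1 θ) θ := fun θ => aux_hasDerivAt_sum s w z θ
  have hG1d : ∀ θ, HasDerivAt G1 (G2 θ) θ := fun θ =>
    aux_hasDerivAt_sum s (fun i => w i * z i) z θ
  have hfd : ∀ θ, HasDerivAt f (-(G1 θ / G θ)) θ := fun θ =>
    ((hGd θ).log (hGpos θ).ne').neg
  have hdf : deriv f = fun θ => -(G1 θ / G θ) := funext fun θ => (hfd θ).deriv
  have hfd2 : ∀ θ, HasDerivAt (deriv f) (-((G2 θ * G θ - G1 θ ^ 2) / G θ ^ 2)) θ := by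
    intro θ
    rw [hdf]
    have := ((hG1d θ).div (hGd θ) (hGpos θ).ne').neg
    exact this.congr_deriv (by ring)
  have key : ∀ θ, G θ * (G2 θ * G θ - G1 θ ^ 2)
      = ∑ i ∈ s, (w i * Real.exp (θ * z i)) * (G θ * z i - G1 θ) ^ 2 := by
    intro θ
    have expand : ∀ i ∈ s, (w i * Real.exp (θ * z i)) * (G θ * z i - G1 θ) ^ 2
        = G θ ^ 2 * ((w i * z i * z i) * Real.exp (θ * z i))
          - (2 * G θ * G1 θ) * ((w i * z i) * Real.exp (θ * z i))
          + G1 θ ^ 2 * (w i * Real.exp (θ * z i)) := by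
      intro i _; ring
    rw [Finset.sum_congr rfl expand]
    rw [Finset.sum_add_distrib, Finset.sum_sub_distrib, ← Finset.mul_sum, ← Finset.mul_sum,
      ← Finset.mul_sum]
    change _ = G θ ^ 2 * G2 θ - 2 * G θ * G1 θ * G1 θ + G1 θ ^ 2 * G θ
    ring
  have hnonneg : ∀ θ, 0 ≤ G2 θ * G θ - G1 θ ^ 2 := by
    intro θ
    have h1 : 0 ≤ G θ * (G2 θ * G θ - G1 θ ^ 2) := by
      rw [key θ]
      exact Finset.sum_nonneg fun i _ => mul_nonneg
        (mul_nonneg (hw i ‹_› |>.le) (Real.exp_pos _).le) (sq_nonneg _)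
    nlinarith [hGpos θ]
  have hcont : ContinuousOn f (Set.Ioi (-1:ℝ)) :=
    (Differentiable.continuous fun θ => (hfd θ).differentiableAt).continuousOn
  constructor
  · refine concaveOn_of_deriv2_nonpos (convex_Ioi _) hcont
      (fun θ _ => (hfd θ).differentiableAt.differentiableWithinAt)
      (fun θ _ => (hfd2 θ).differentiableAt.differentiableWithinAt) ?_
    intro θ _
    have : deriv^[2] f θ = -((G2 θ * G θ - G1 θ ^ 2) / G θ ^ 2) := by
      show deriv (deriv f) θ = _
      exact (hfd2 θ).deriv
    rw [this]
    exact neg_nonpos_of_nonneg (div_nonneg (hnonneg θ) (sq_nonneg _))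
  · rintro ⟨a, ha, b, hb, hab⟩
    refine strictConcaveOn_of_deriv2_neg (convex_Ioi _) hcont ?_
    intro θ _
    have hd2 : deriv^[2] f θ = -((G2 θ * G θ - G1 θ ^ 2) / G θ ^ 2) := by
      show deriv (deriv f) θ = _
      exact (hfd2 θ).deriv
    rw [hd2]
    have hpos : 0 < G2 θ * G θ - G1 θ ^ 2 := by
      have hsum : 0 < ∑ i ∈ s, (w i * Real.exp (θ * z i)) * (G θ * z i - G1 θ) ^ 2 := by
        have hterm : ∀ i ∈ s, 0 ≤ (w i * Real.exp (θ * z i)) * (G θ * z i - G1 θ) ^ 2 :=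
          fun i hi => mul_nonneg (mul_nonneg (hw i hi).le (Real.exp_pos _).le) (sq_nonneg _)
        have hwit : ∃ i ∈ s, 0 < (w i * Real.exp (θ * z i)) * (G θ * z i - G1 θ) ^ 2 := by
          have h : G θ * z a - G1 θ ≠ 0 ∨ G θ * z b - G1 θ ≠ 0 := by
            by_contra h
            push_neg at h
            apply hab
            have h1 := h.1; have h2 := h.2
            have heq : G θ * z a = G θ * z b := by linarith
            exact mul_left_cancel₀ (hGpos θ).ne' heq
          rcases h with h | h
          · exact ⟨a, ha, mul_pos (mul_pos (hw a ha) (Real.exp_pos _)) (by positivity)⟩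
          · exact ⟨b, hb, mul_pos (mul_pos (hw b hb) (Real.exp_pos _)) (by positivity)⟩
        exact Finset.sum_pos' hterm hwit
      have h1 : 0 < G θ * (G2 θ * G θ - G1 θ ^ 2) := by rw [key θ]; exact hsum
      nlinarith [hGpos θ]
    have h2 : (0:ℝ) < (G2 θ * G θ - G1 θ ^ 2) / G θ ^ 2 :=
      div_pos hpos (pow_pos (hGpos θ) 2)
    linarith

end Aux

/-- Marginal distribution on `𝒴`. -/
noncomputable def margY {𝒳 𝒴 : Type*} [Fintype 𝒳] (P : 𝒳 × 𝒴 → ℝ) (y : 𝒴) : ℝ :=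
  ∑ x : 𝒳, P (x, y)

/-- The optimizing distribution `P_Y^{(1+θ')}`. -/
noncomputable def tiltY {𝒳 𝒴 : Type*} [Fintype 𝒳] [Fintype 𝒴]
    (P : 𝒳 × 𝒴 → ℝ) (θ' : ℝ) (y : 𝒴) : ℝ :=
  (∑ x : 𝒳, P (x, y) ^ (1 + θ')) ^ (1 / (1 + θ'))
    / ∑ y' : 𝒴, (∑ x : 𝒳, P (x, y') ^ (1 + θ')) ^ (1 / (1 + θ'))

/-- `θ · H_{1+θ,1+θ'}(X|Y) = θ · H_{1+θ}(P_{XY}|P_Y^{(1+θ')})`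
(which equals `0` at `θ = 0`). -/
noncomputable def thetaCondRenyiTwo {𝒳 𝒴 : Type*} [Fintype 𝒳] [Fintype 𝒴]
    (P : 𝒳 × 𝒴 → ℝ) (θ θ' : ℝ) : ℝ :=
  -Real.log (∑ x : 𝒳, ∑ y : 𝒴,
    if 0 < P (x, y) then P (x, y) ^ (1 + θ) * tiltY P θ' y ^ (-θ) else 0)

/-- Conditional entropy `H(X|Y)`. -/
noncomputable def condEnt {𝒳 𝒴 : Type*} [Fintype 𝒳] [Fintype 𝒴]
    (P : 𝒳 × 𝒴 → ℝ) : ℝ :=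
  -∑ x : 𝒳, ∑ y : 𝒴,
    if 0 < P (x, y) then P (x, y) * Real.log (P (x, y) / margY P y) else 0

/-- Conditional varentropy `V(X|Y)`. -/
noncomputable def condVarEnt {𝒳 𝒴 : Type*} [Fintype 𝒳] [Fintype 𝒴]
    (P : 𝒳 × 𝒴 → ℝ) : ℝ :=
  (∑ x : 𝒳, ∑ y : 𝒴,
    if 0 < P (x, y) then P (x, y) * (Real.log (P (x, y) / margY P y)) ^ 2 else 0)
  - (condEnt P) ^ 2

theorem thetaCondRenyiTwo_concave_iff {𝒳 𝒴 : Type*} [Fintype 𝒳] [Fintype 𝒴]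
    (P : 𝒳 × 𝒴 → ℝ) (hP0 : ∀ p, 0 ≤ P p) (hP1 : ∑ p : 𝒳 × 𝒴, P p = 1)
    (θ' : ℝ) (hθ' : θ' ∈ Set.Ioo (-1 : ℝ) 0 ∪ Set.Ioi 0) :
    ConcaveOn ℝ (Set.Ioi (-1 : ℝ)) (fun θ => thetaCondRenyiTwo P θ θ')
    ∧ (StrictConcaveOn ℝ (Set.Ioi (-1 : ℝ)) (fun θ => thetaCondRenyiTwo P θ θ')
        ↔ 0 < condVarEnt P) := by
  classical
  have hθ1 : 0 < 1 + θ' := by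
    rcases hθ' with h | h
    · have := h.1; linarith
    · have : (0:ℝ) < θ' := h; linarith
  set s : Finset (𝒳 × 𝒴) := Finset.univ.filter (fun p => 0 < P p) with hsdef
  have hmem : ∀ p : 𝒳 × 𝒴, p ∈ s ↔ 0 < P p := by intro p; simp [hsdef]
  have hsum_if : ∀ f : 𝒳 × 𝒴 → ℝ,
      (∑ x : 𝒳, ∑ y : 𝒴, if 0 < P (x, y) then f (x, y) else 0) = ∑ p ∈ s, f p := by
    intro f
    have h1 : (∑ p : 𝒳 × 𝒴, if 0 < P p then f p else 0)
        = ∑ x : 𝒳, ∑ y : 𝒴, if 0 < P (x, y) then f (x, y) else 0 :=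
      Fintype.sum_prod_type _
    rw [← h1, hsdef, Finset.sum_filter]
  have hsum1 : ∑ p ∈ s, P p = 1 := by
    rw [hsdef, Finset.sum_filter_of_ne (fun p _ hne => lt_of_le_of_ne (hP0 p) (Ne.symm hne)),
      hP1]
  have hsne : s.Nonempty := by
    rcases Finset.eq_empty_or_nonempty s with h | h
    · rw [h, Finset.sum_empty] at hsum1; norm_num at hsum1
    · exact h
  have hMpos : ∀ x y, 0 < P (x, y) → 0 < margY P y := by
    intro x y h
    exact lt_of_lt_of_le h (Finset.single_le_sum (fun x' _ => hP0 (x', y)) (Finset.mem_univ x))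
  set T : 𝒴 → Finset 𝒳 := fun y => Finset.univ.filter (fun x => 0 < P (x, y)) with hTdef
  have hTmem : ∀ x y, x ∈ T y ↔ 0 < P (x, y) := by intro x y; simp [hTdef]
  set S : 𝒴 → ℝ := fun y => ∑ x : 𝒳, P (x, y) ^ (1 + θ') with hSdef
  set R : 𝒴 → ℝ := fun y => S y ^ (1 / (1 + θ')) with hRdef
  set D : ℝ := ∑ y : 𝒴, R y with hDdef
  have hQeq : ∀ y, tiltY P θ' y = R y / D := fun y => rfl
  have hSfil : ∀ y, S y = ∑ x ∈ T y, P (x, y) ^ (1 + θ') := by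
    intro y
    refine (Finset.sum_filter_of_ne fun x _ hne => ?_).symm
    by_contra h
    have h0 : P (x, y) = 0 := le_antisymm (not_lt.1 h) (hP0 _)
    exact hne (by rw [h0]; exact Real.zero_rpow hθ1.ne')
  have hMfil : ∀ y, margY P y = ∑ x ∈ T y, P (x, y) :=
    fun y => (Finset.sum_filter_of_ne fun x _ hne => lt_of_le_of_ne (hP0 _) (Ne.symm hne)).symm
  have hS0 : ∀ y, 0 ≤ S y := fun y => Finset.sum_nonneg fun x _ => Real.rpow_nonneg (hP0 _) _
  have hSpos : ∀ x y, 0 < P (x, y) → 0 < S y := fun x y h =>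
    Finset.sum_pos' (fun x' _ => Real.rpow_nonneg (hP0 _) _)
      ⟨x, Finset.mem_univ x, Real.rpow_pos_of_pos h _⟩
  have hDpos : 0 < D := by
    obtain ⟨⟨x0, y0⟩, hp0⟩ := hsne
    exact Finset.sum_pos' (fun y _ => Real.rpow_nonneg (hS0 y) _)
      ⟨y0, Finset.mem_univ y0, Real.rpow_pos_of_pos (hSpos x0 y0 ((hmem _).1 hp0)) _⟩
  have hQpos : ∀ x y, 0 < P (x, y) → 0 < tiltY P θ' y := fun x y h => by
    rw [hQeq]; exact div_pos (Real.rpow_pos_of_pos (hSpos x y h) _) hDpos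
  set z : 𝒳 × 𝒴 → ℝ := fun p => Real.log (P p) - Real.log (tiltY P θ' p.2) with hzdef
  set L : 𝒳 × 𝒴 → ℝ := fun p => Real.log (P p / margY P p.2) with hLdef
  -- rewrite of the main function
  have hrw : (fun θ => thetaCondRenyiTwo P θ θ')
      = fun θ => -Real.log (∑ p ∈ s, P p * Real.exp (θ * z p)) := by
    funext θ
    show -Real.log _ = _
    congr 1
    rw [hsum_if (fun p => P p ^ (1 + θ) * tiltY P θ' p.2 ^ (-θ))]
    refine congrArg Real.log (Finset.sum_congr rfl fun p hp => ?_)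
    have hPp : 0 < P p := (hmem p).1 hp
    have hQp : 0 < tiltY P θ' p.2 := hQpos p.1 p.2 (by rw [← Prod.mk.eta (p := p)] at hPp; exact hPp)
    rw [Real.rpow_def_of_pos hPp, Real.rpow_def_of_pos hQp, ← Real.exp_add]
    rw [hzdef]
    conv_rhs => rw [← Real.exp_log hPp, ← Real.exp_add]
    congr 1
    ring
  -- entropy / varentropy rewrites
  have hEnt : condEnt P = -∑ p ∈ s, P p * L p := by
    show -(∑ x : 𝒳, ∑ y : 𝒴,
        if 0 < P (x, y) then P (x, y) * Real.log (P (x, y) / margY P y) else 0) = _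
    rw [hsum_if (fun p => P p * Real.log (P p / margY P p.2))]
  set μ : ℝ := ∑ p ∈ s, P p * L p with hμdef
  have hVarEq : condVarEnt P = (∑ p ∈ s, P p * L p ^ 2) - μ ^ 2 := by
    show (∑ x : 𝒳, ∑ y : 𝒴,
        if 0 < P (x, y) then P (x, y) * Real.log (P (x, y) / margY P y) ^ 2 else 0)
        - condEnt P ^ 2 = _
    rw [hsum_if (fun p => P p * Real.log (P p / margY P p.2) ^ 2), hEnt, neg_sq]
  have hV2 : condVarEnt P = ∑ p ∈ s, P p * (L p - μ) ^ 2 := by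
    rw [hVarEq]
    have expand : ∀ p ∈ s, P p * (L p - μ) ^ 2
        = (P p * L p ^ 2) - (2 * μ) * (P p * L p) + (μ ^ 2) * P p := fun p _ => by ring
    rw [Finset.sum_congr rfl expand, Finset.sum_add_distrib, Finset.sum_sub_distrib,
      ← Finset.mul_sum, ← Finset.mul_sum, hsum1, ← hμdef]
    ring
  have hVnonneg : 0 ≤ condVarEnt P := by
    rw [hV2]
    exact Finset.sum_nonneg fun p hp => mul_nonneg ((hmem p).1 hp).le (sq_nonneg _)
  -- Lemma A : z constant on s implies L constant on s
  have lemA : ∀ c : ℝ, (∀ p ∈ s, z p = c) → ∃ c', ∀ p ∈ s, L p = c' := by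
    intro c hc
    have hPz : ∀ p ∈ s, P p = Real.exp c * tiltY P θ' p.2 := by
      intro p hp
      have hPp : 0 < P p := (hmem p).1 hp
      have hQp : 0 < tiltY P θ' p.2 :=
        hQpos p.1 p.2 (by rw [← Prod.mk.eta (p := p)] at hPp; exact hPp)
      have h1 : Real.log (P p) = c + Real.log (tiltY P θ' p.2) := by
        have h2 := hc p hp
        have h3 : Real.log (P p) - Real.log (tiltY P θ' p.2) = c := h2
        linarith
      calc P p = Real.exp (Real.log (P p)) := (Real.exp_log hPp).symm
        _ = Real.exp c * tiltY P θ' p.2 := by rw [h1, Real.exp_add, Real.exp_log hQp]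
    refine ⟨-Real.log ((D / Real.exp c) ^ (1 + θ')), ?_⟩
    rintro ⟨x, y⟩ hp
    have hPp : 0 < P (x, y) := (hmem _).1 hp
    have hQy : 0 < tiltY P θ' y := hQpos x y hPp
    have hxT : x ∈ T y := (hTmem x y).2 hPp
    have hSy : S y = ((T y).card : ℝ) * (Real.exp c * tiltY P θ' y) ^ (1 + θ') := by
      have hterm : ∀ x' ∈ T y, P (x', y) ^ (1 + θ')
          = (Real.exp c * tiltY P θ' y) ^ (1 + θ') := fun x' hx' => by
        simp only [hPz (x', y) ((hmem _).2 ((hTmem x' y).1 hx'))]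
      rw [hSfil y, Finset.sum_congr rfl hterm, Finset.sum_const, nsmul_eq_mul]
    have hRy : R y = ((T y).card : ℝ) ^ (1 / (1 + θ')) * (Real.exp c * tiltY P θ' y) := by
      have h0 : R y = S y ^ (1 / (1 + θ')) := rfl
      rw [h0, hSy, Real.mul_rpow (Nat.cast_nonneg _) (Real.rpow_nonneg (by positivity) _)]
      congr 1
      rw [one_div, Real.rpow_rpow_inv (by positivity) hθ1.ne']
    have hRQ : R y = tiltY P θ' y * D := by
      rw [hQeq, div_mul_cancel₀ _ hDpos.ne']
    have hDval : D = ((T y).card : ℝ) ^ (1 / (1 + θ')) * Real.exp c := by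
      refine mul_right_cancel₀ hQy.ne' ?_
      calc D * tiltY P θ' y = tiltY P θ' y * D := mul_comm _ _
        _ = R y := hRQ.symm
        _ = ((T y).card : ℝ) ^ (1 / (1 + θ')) * (Real.exp c * tiltY P θ' y) := hRy
        _ = ((T y).card : ℝ) ^ (1 / (1 + θ')) * Real.exp c * tiltY P θ' y := by ring
    have hcard : ((T y).card : ℝ) ^ (1 / (1 + θ')) = D / Real.exp c := by
      rw [hDval, mul_div_cancel_right₀ _ (Real.exp_pos c).ne']
    have hNval : ((T y).card : ℝ) = (D / Real.exp c) ^ (1 + θ') := by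
      rw [← hcard, one_div, Real.rpow_inv_rpow (Nat.cast_nonneg _) hθ1.ne']
    have hMy : margY P y = ((T y).card : ℝ) * (Real.exp c * tiltY P θ' y) := by
      have hterm : ∀ x' ∈ T y, P (x', y) = Real.exp c * tiltY P θ' y := fun x' hx' => by
        simp only [hPz (x', y) ((hmem _).2 ((hTmem x' y).1 hx'))]
      rw [hMfil y, Finset.sum_congr rfl hterm, Finset.sum_const, nsmul_eq_mul]
    have hNpos : 0 < ((T y).card : ℝ) :=
      Nat.cast_pos.2 (Finset.card_pos.2 ⟨x, hxT⟩)
    show Real.log (P (x, y) / margY P ((x, y) : 𝒳 × 𝒴).2) = _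
    rw [hPz (x, y) hp, hMy]
    have hdiv : Real.exp c * tiltY P θ' y
        / (((T y).card : ℝ) * (Real.exp c * tiltY P θ' y)) = (((T y).card : ℝ))⁻¹ := by
      rw [mul_comm ((T y).card : ℝ), ← div_div, div_self (mul_pos (Real.exp_pos c) hQy).ne', one_div]
    rw [hdiv, Real.log_inv, hNval]
  -- Lemma B : L constant on s implies z constant on s
  have lemB : ∀ c : ℝ, (∀ p ∈ s, L p = c) → ∀ p ∈ s, z p = c := by
    intro c hc
    have hPL : ∀ p ∈ s, P p = Real.exp c * margY P p.2 := by
      intro p hp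
      have hPp : 0 < P p := (hmem p).1 hp
      have hMp : 0 < margY P p.2 :=
        hMpos p.1 p.2 (by rw [← Prod.mk.eta (p := p)] at hPp; exact hPp)
      have hdiv : P p / margY P p.2 = Real.exp c := by
        have h1 : Real.log (P p / margY P p.2) = c := hc p hp
        rw [← h1]
        exact (Real.exp_log (div_pos hPp hMp)).symm
      rw [div_eq_iff hMp.ne'] at hdiv
      exact hdiv
    have hN : ∀ y, (T y).Nonempty → ((T y).card : ℝ) * Real.exp c = 1 := by
      rintro y ⟨x, hx⟩
      have hPxy : 0 < P (x, y) := (hTmem x y).1 hx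
      have hMy : 0 < margY P y := hMpos x y hPxy
      have hMeq : margY P y = ((T y).card : ℝ) * (Real.exp c * margY P y) := by
        have hterm : ∀ x' ∈ T y, P (x', y) = Real.exp c * margY P y := fun x' hx' => by
          simp only [hPL (x', y) ((hmem _).2 ((hTmem x' y).1 hx'))]
        conv_lhs => rw [hMfil y, Finset.sum_congr rfl hterm, Finset.sum_const, nsmul_eq_mul]
      refine mul_right_cancel₀ hMy.ne' ?_
      rw [one_mul]
      calc ((T y).card : ℝ) * Real.exp c * margY P y
          = ((T y).card : ℝ) * (Real.exp c * margY P y) := by ring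
        _ = margY P y := hMeq.symm
    have hRy : ∀ y, R y = (Real.exp (-c) ^ (1 / (1 + θ')) * Real.exp c) * margY P y := by
      intro y
      rcases Finset.eq_empty_or_nonempty (T y) with hT | hT
      · have hM : margY P y = 0 := by rw [hMfil y, hT, Finset.sum_empty]
        have hSy : S y = 0 := by rw [hSfil y, hT, Finset.sum_empty]
        have h0 : R y = S y ^ (1 / (1 + θ')) := rfl
        rw [h0, hSy, Real.zero_rpow (by positivity : (1:ℝ) / (1 + θ') ≠ 0), hM, mul_zero]
      · have hNe : ((T y).card : ℝ) * Real.exp c = 1 := hN y hT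
        have hNeq : ((T y).card : ℝ) = Real.exp (-c) := by
          rw [Real.exp_neg]
          exact eq_inv_of_mul_eq_one_left hNe
        have hSy : S y = ((T y).card : ℝ) * (Real.exp c * margY P y) ^ (1 + θ') := by
          have hterm : ∀ x' ∈ T y, P (x', y) ^ (1 + θ')
              = (Real.exp c * margY P y) ^ (1 + θ') := fun x' hx' => by
            simp only [hPL (x', y) ((hmem _).2 ((hTmem x' y).1 hx'))]
          rw [hSfil y, Finset.sum_congr rfl hterm, Finset.sum_const, nsmul_eq_mul]
        obtain ⟨x, hx⟩ := hT
        have hMy : 0 < margY P y := hMpos x y ((hTmem x y).1 hx)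
        have h0 : R y = S y ^ (1 / (1 + θ')) := rfl
        rw [h0, hSy, Real.mul_rpow (Nat.cast_nonneg _) (Real.rpow_nonneg (by positivity) _),
          hNeq]
        rw [show ((Real.exp c * margY P y) ^ (1 + θ')) ^ (1 / (1 + θ'))
            = Real.exp c * margY P y by
          rw [one_div, Real.rpow_rpow_inv (by positivity) hθ1.ne']]
        ring
    have hMsum : ∑ y : 𝒴, margY P y = 1 := by
      rw [← hP1]
      exact (Fintype.sum_prod_type_right _).symm
    have hKpos : 0 < Real.exp (-c) ^ (1 / (1 + θ')) * Real.exp c :=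
      mul_pos (Real.rpow_pos_of_pos (Real.exp_pos _) _) (Real.exp_pos _)
    have hDK : D = Real.exp (-c) ^ (1 / (1 + θ')) * Real.exp c := by
      have h1 : D = ∑ y : 𝒴, (Real.exp (-c) ^ (1 / (1 + θ')) * Real.exp c) * margY P y :=
        Finset.sum_congr rfl fun y _ => hRy y
      rw [h1, ← Finset.mul_sum, hMsum, mul_one]
    have hQM : ∀ y, tiltY P θ' y = margY P y := by
      intro y
      rw [hQeq, hRy y, hDK, mul_comm, mul_div_assoc, div_self hKpos.ne', mul_one]

    intro p hp
    have hPp : 0 < P p := (hmem p).1 hp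
    have hMp : 0 < margY P p.2 :=
      hMpos p.1 p.2 (by rw [← Prod.mk.eta (p := p)] at hPp; exact hPp)
    show Real.log (P p) - Real.log (tiltY P θ' p.2) = c
    rw [hQM p.2, ← Real.log_div hPp.ne' hMp.ne']
    exact hc p hp
  -- weight positivity for aux lemma
  have hw : ∀ p ∈ s, 0 < P p := fun p hp => (hmem p).1 hp
  have hlin_of : (∀ p ∈ s, z p = μ) → ∀ θ : ℝ, thetaCondRenyiTwo P θ θ' = -(θ * μ) := by
    intro hz θ
    have h1 := congrFun hrw θ
    rw [h1]
    have hsz : ∑ p ∈ s, P p * Real.exp (θ * z p) = Real.exp (θ * μ) := by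
      have hterm : ∀ p ∈ s, P p * Real.exp (θ * z p) = P p * Real.exp (θ * μ) :=
        fun p hp => by rw [hz p hp]
      rw [Finset.sum_congr rfl hterm, ← Finset.sum_mul, hsum1, one_mul]
    rw [hsz, Real.log_exp]
  refine ⟨by rw [hrw]; exact (aux_concave s hsne P z hw).1, ?_, ?_⟩
  · -- strict implies V > 0
    intro hstrict
    by_contra hVn
    have hV0 : condVarEnt P = 0 := le_antisymm (not_lt.1 hVn) hVnonneg
    have hLμ : ∀ p ∈ s, L p = μ := by
      intro p hp
      have hsum0 : ∑ q ∈ s, P q * (L q - μ) ^ 2 = 0 := by rw [← hV2, hV0]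
      have h1 := (Finset.sum_eq_zero_iff_of_nonneg
        (fun q hq => mul_nonneg ((hmem q).1 hq).le (sq_nonneg _))).1 hsum0 p hp
      have hPp : 0 < P p := (hmem p).1 hp
      have h2 : (L p - μ) ^ 2 = 0 := by
        rcases mul_eq_zero.1 h1 with h | h
        · exact absurd h hPp.ne'
        · exact h
      have h3 : L p - μ = 0 := by
        have := sq_eq_zero_iff.1 h2
        exact this
      linarith
    have hzμ := lemB μ hLμ
    have hlin := hlin_of hzμ
    have h2 := hstrict.2 (show (0:ℝ) ∈ Set.Ioi (-1:ℝ) by norm_num)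
      (show (1:ℝ) ∈ Set.Ioi (-1:ℝ) by norm_num) (by norm_num)
      (by norm_num : (0:ℝ) < 1/2) (by norm_num : (0:ℝ) < 1/2) (by norm_num)
    simp only [smul_eq_mul, hlin] at h2
    linarith
  · -- V > 0 implies strict
    intro hV
    have hVne : ¬ ∀ p ∈ s, L p = μ := by
      intro hall
      have hzero : condVarEnt P = 0 := by
        rw [hV2]
        exact Finset.sum_eq_zero fun p hp => by rw [hall p hp, sub_self]; ring
      rw [hzero] at hV
      exact lt_irrefl 0 hV
    have hzne : ∃ a ∈ s, ∃ b ∈ s, z a ≠ z b := by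
      by_contra h
      push_neg at h
      obtain ⟨p0, hp0⟩ := hsne
      obtain ⟨c', hc'⟩ := lemA (z p0) (fun p hp => h p hp p0 hp0)
      apply hVne
      have hμc : μ = c' := by
        have hterm : ∀ p ∈ s, P p * L p = P p * c' := fun p hp => by rw [hc' p hp]
        rw [hμdef, Finset.sum_congr rfl hterm, ← Finset.sum_mul, hsum1, one_mul]
      intro p hp
      rw [hc' p hp, hμc]
    rw [hrw]
    exact (aux_concave s hsne P z hw).2 hzne
end

section
/- For every θ ∈ (−1,0)∪(0,∞), the two-parameter conditional Rényi entropy H_{1+θ,1+θ'}(X|Y), viewed as a function of θ' ∈ (−1,0)∪(0,∞), is maximized at θ' = θ; that is, H_{1+θ,1+θ'}(X|Y) ≤ H_{1+θ,1+θ}(X|Y) for all θ' ∈ (−1,0)∪(0,∞). -/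
open Real Filter

/-- Conditional Rényi entropy of order `1+θ` relative to `Q`. -/
noncomputable def condRenyiQ {𝒳 𝒴 : Type*} [Fintype 𝒳] [Fintype 𝒴]
    (P : 𝒳 × 𝒴 → ℝ) (Q : 𝒴 → ℝ) (θ : ℝ) : ℝ :=
  -(1 / θ) * Real.log (∑ x : 𝒳, ∑ y : 𝒴,
    if 0 < P (x, y) then P (x, y) ^ (1 + θ) * Q y ^ (-θ) else 0)

/-- Two-parameter conditional Rényi entropy `H_{1+θ,1+θ'}(X|Y)`. -/
noncomputable def condRenyiTwo {𝒳 𝒴 : Type*} [Fintype 𝒳] [Fintype 𝒴]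
    (P : 𝒳 × 𝒴 → ℝ) (θ θ' : ℝ) : ℝ :=
  condRenyiQ P (tiltY P θ') θ

private lemma sum_rpow_pos_iff {ι : Type*} [Fintype ι] (f : ι → ℝ)
    (hf : ∀ i, 0 ≤ f i) (t : ℝ) (ht : t ≠ 0) :
    0 < ∑ i, f i ^ t ↔ ∃ i, 0 < f i := by
  constructor
  · intro h
    by_contra hc
    push_neg at hc
    have h0 : ∀ i, f i = 0 := fun i => le_antisymm (hc i) (hf i)
    simp [h0, Real.zero_rpow ht] at h
  · rintro ⟨i, hi⟩
    exact Finset.sum_pos' (fun j _ => Real.rpow_nonneg (hf j) t)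
      ⟨i, Finset.mem_univ i, Real.rpow_pos_of_pos hi t⟩

/-- The double sum in `condRenyiQ` equals `∑ y, (∑ x, P (x,y) ^ (1+θ)) * Q y ^ (-θ)`. -/
private lemma condRenyiQ_eq {𝒳 𝒴 : Type*} [Fintype 𝒳] [Fintype 𝒴]
    (P : 𝒳 × 𝒴 → ℝ) (hP0 : ∀ p, 0 ≤ P p) (Q : 𝒴 → ℝ) (θ : ℝ) (hθ : 1 + θ ≠ 0) :
    condRenyiQ P Q θ
      = -(1 / θ) * Real.log (∑ y : 𝒴, (∑ x : 𝒳, P (x, y) ^ (1 + θ)) * Q y ^ (-θ)) := by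
  unfold condRenyiQ
  congr 1
  rw [Finset.sum_comm]
  refine congrArg _ (Finset.sum_congr rfl fun y _ => ?_)
  rw [Finset.sum_mul]
  refine Finset.sum_congr rfl fun x _ => ?_
  by_cases h : 0 < P (x, y)
  · simp [h]
  · have h0 : P (x, y) = 0 := le_antisymm (not_lt.mp h) (hP0 _)
    simp [h, h0, Real.zero_rpow hθ]

theorem condRenyiTwo_le_diag {𝒳 𝒴 : Type*} [Fintype 𝒳] [Fintype 𝒴]
    (P : 𝒳 × 𝒴 → ℝ) (hP0 : ∀ p, 0 ≤ P p) (hP1 : ∑ p : 𝒳 × 𝒴, P p = 1)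
    (θ : ℝ) (hθ : θ ∈ Set.Ioo (-1 : ℝ) 0 ∪ Set.Ioi 0) :
    ∀ θ' ∈ Set.Ioo (-1 : ℝ) 0 ∪ Set.Ioi 0,
      condRenyiTwo P θ θ' ≤ condRenyiTwo P θ θ := by
  intro θ' hθ'
  have hθb : -1 < θ ∧ θ ≠ 0 := by
    rcases hθ with h | h
    · exact ⟨h.1, ne_of_lt h.2⟩
    · exact ⟨by linarith [Set.mem_Ioi.mp h], ne_of_gt h⟩
  have hθ'b : -1 < θ' ∧ θ' ≠ 0 := by
    rcases hθ' with h | h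
    · exact ⟨h.1, ne_of_lt h.2⟩
    · exact ⟨by linarith [Set.mem_Ioi.mp h], ne_of_gt h⟩
  have hT : 0 < 1 + θ := by linarith [hθb.1]
  have hT' : 0 < 1 + θ' := by linarith [hθ'b.1]
  set A : 𝒴 → ℝ := fun y => ∑ x : 𝒳, P (x, y) ^ (1 + θ) with hAdef
  set A' : 𝒴 → ℝ := fun y => ∑ x : 𝒳, P (x, y) ^ (1 + θ') with hA'def
  have hAfold : ∀ y : 𝒴, (∑ x : 𝒳, P (x, y) ^ (1 + θ)) = A y := fun y => rfl
  have hA0 : ∀ y, 0 ≤ A y := fun y =>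
    Finset.sum_nonneg fun x _ => Real.rpow_nonneg (hP0 _) _
  have hA'0 : ∀ y, 0 ≤ A' y := fun y =>
    Finset.sum_nonneg fun x _ => Real.rpow_nonneg (hP0 _) _
  -- existence of a positive entry
  have hex : ∃ p : 𝒳 × 𝒴, 0 < P p := by
    by_contra hc
    push_neg at hc
    have h0 : ∀ p : 𝒳 × 𝒴, P p = 0 := fun p => le_antisymm (hc p) (hP0 p)
    simp [h0] at hP1
  obtain ⟨⟨x₀, y₀⟩, hp₀⟩ := hex
  have hiffA : ∀ y, (0 < A y ↔ ∃ x, 0 < P (x, y)) := fun y =>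
    sum_rpow_pos_iff _ (fun x => hP0 _) _ hT.ne'
  have hiffA' : ∀ y, (0 < A' y ↔ ∃ x, 0 < P (x, y)) := fun y =>
    sum_rpow_pos_iff _ (fun x => hP0 _) _ hT'.ne'
  -- Z' and Q'
  set Z' : ℝ := ∑ y : 𝒴, (A' y) ^ (1 / (1 + θ')) with hZ'def
  have hZ'pos : 0 < Z' := Finset.sum_pos'
    (fun y _ => Real.rpow_nonneg (hA'0 y) _)
    ⟨y₀, Finset.mem_univ _, Real.rpow_pos_of_pos ((hiffA' y₀).2 ⟨x₀, hp₀⟩) _⟩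
  set Q' : 𝒴 → ℝ := tiltY P θ' with hQ'def
  have hQ'eq : ∀ y, Q' y = (A' y) ^ (1 / (1 + θ')) / Z' := fun y => rfl
  have hQ'0 : ∀ y, 0 ≤ Q' y := fun y => by
    rw [hQ'eq]
    exact div_nonneg (Real.rpow_nonneg (hA'0 y) _) hZ'pos.le
  have hQ'sum : ∑ y : 𝒴, Q' y = 1 := by
    simp only [hQ'eq, ← Finset.sum_div]
    exact div_self hZ'pos.ne'
  have hQ'pos : ∀ y, 0 < A y → 0 < Q' y := fun y hy => by
    rw [hQ'eq]
    exact div_pos (Real.rpow_pos_of_pos ((hiffA' y).2 ((hiffA y).1 hy)) _) hZ'pos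
  have hQ'zero : ∀ y, Q' y = 0 → A y = 0 := fun y h => by
    by_contra hc
    exact absurd h (ne_of_gt (hQ'pos y (lt_of_le_of_ne (hA0 y) (Ne.symm hc))))
  -- Z (diagonal normalizer)
  set Z : ℝ := ∑ y : 𝒴, (A y) ^ (1 / (1 + θ)) with hZdef
  have hZpos : 0 < Z := Finset.sum_pos'
    (fun y _ => Real.rpow_nonneg (hA0 y) _)
    ⟨y₀, Finset.mem_univ _, Real.rpow_pos_of_pos ((hiffA y₀).2 ⟨x₀, hp₀⟩) _⟩
  -- the off-diagonal sum S'
  set S' : ℝ := ∑ y : 𝒴, A y * Q' y ^ (-θ) with hS'def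
  have hS'pos : 0 < S' := Finset.sum_pos'
    (fun y _ => mul_nonneg (hA0 y) (Real.rpow_nonneg (hQ'0 y) _))
    ⟨y₀, Finset.mem_univ _, mul_pos ((hiffA y₀).2 ⟨x₀, hp₀⟩)
      (Real.rpow_pos_of_pos (hQ'pos y₀ ((hiffA y₀).2 ⟨x₀, hp₀⟩)) _)⟩
  -- the diagonal sum equals Z ^ (1+θ)
  have hdiag : (∑ y : 𝒴, A y * (tiltY P θ y) ^ (-θ)) = Z ^ (1 + θ) := by
    have hm : 1 + 1 / (1 + θ) * (-θ) = 1 / (1 + θ) := by field_simp; ring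
    have hterm : ∀ y : 𝒴, A y * (tiltY P θ y) ^ (-θ)
        = (A y) ^ (1 / (1 + θ)) * Z ^ θ := by
      intro y
      have htilt : tiltY P θ y = (A y) ^ (1 / (1 + θ)) / Z := rfl
      rcases eq_or_lt_of_le (hA0 y) with h0 | hpos
      · rw [htilt, ← h0, Real.zero_rpow (by positivity : (1:ℝ)/(1+θ) ≠ 0)]
        simp
      · rw [htilt]
        calc A y * ((A y) ^ (1 / (1 + θ)) / Z) ^ (-θ)
            = A y * ((A y) ^ (1 / (1 + θ) * (-θ)) * Z ^ θ) := by
              rw [Real.div_rpow (Real.rpow_nonneg (hA0 y) _) hZpos.le,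
                ← Real.rpow_mul (hA0 y), Real.rpow_neg hZpos.le, div_inv_eq_mul]
          _ = (A y) ^ (1 + 1 / (1 + θ) * (-θ)) * Z ^ θ := by
              rw [Real.rpow_add hpos, Real.rpow_one]; ring
          _ = (A y) ^ (1 / (1 + θ)) * Z ^ θ := by rw [hm]
    calc (∑ y : 𝒴, A y * (tiltY P θ y) ^ (-θ))
        = ∑ y : 𝒴, (A y) ^ (1 / (1 + θ)) * Z ^ θ :=
          Finset.sum_congr rfl fun y _ => hterm y
      _ = Z * Z ^ θ := by rw [← Finset.sum_mul, ← hZdef]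
      _ = Z ^ (1 + θ) := by rw [Real.rpow_add hZpos, Real.rpow_one]
  -- Jensen auxiliary function
  set z : 𝒴 → ℝ := fun y => if Q' y = 0 then 0 else (A y) ^ (1 / (1 + θ)) / Q' y with hzdef
  have hz0 : ∀ y, 0 ≤ z y := fun y => by
    by_cases h : Q' y = 0
    · simp [hzdef, h]
    · simp only [hzdef, if_neg h]
      exact div_nonneg (Real.rpow_nonneg (hA0 y) _) (hQ'0 y)
  have hwz : ∀ y, Q' y * z y = (A y) ^ (1 / (1 + θ)) := fun y => by
    by_cases h : Q' y = 0
    · rw [h, hQ'zero y h, zero_mul, Real.zero_rpow (by positivity : (1:ℝ)/(1+θ) ≠ 0)]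
    · simp only [hzdef, if_neg h]
      rw [mul_comm, div_mul_cancel₀ _ h]
  have hwzT : ∀ y, Q' y * (z y) ^ (1 + θ) = A y * Q' y ^ (-θ) := fun y => by
    by_cases h : Q' y = 0
    · simp [hzdef, h, hQ'zero y h, Real.zero_rpow hT.ne']
    · have hq : 0 < Q' y := lt_of_le_of_ne (hQ'0 y) (Ne.symm h)
      simp only [hzdef, if_neg h]
      rw [Real.div_rpow (Real.rpow_nonneg (hA0 y) _) (hQ'0 y),
        ← Real.rpow_mul (hA0 y), (by field_simp : 1 / (1 + θ) * (1 + θ) = (1:ℝ)),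
        Real.rpow_one]
      have hre : Q' y ^ (-θ) = Q' y / Q' y ^ (1 + θ) := by
        rw [eq_div_iff (by positivity : Q' y ^ (1+θ) ≠ 0), ← Real.rpow_add hq,
          (by ring : -θ + (1 + θ) = (1:ℝ)), Real.rpow_one]
      rw [hre]; ring
  have hsum1 : ∑ y : 𝒴, Q' y * z y = Z := by
    rw [hZdef]; exact Finset.sum_congr rfl fun y _ => hwz y
  have hsum2 : ∑ y : 𝒴, Q' y * (z y) ^ (1 + θ) = S' := by
    rw [hS'def]; exact Finset.sum_congr rfl fun y _ => hwzT y
  -- rewrite both entropies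
  have hED : condRenyiTwo P θ θ = -(1/θ) * Real.log (Z ^ (1 + θ)) := by
    rw [condRenyiTwo, condRenyiQ_eq P hP0 _ θ hT.ne']
    simp only [hAfold]
    rw [hdiag]
  have hE' : condRenyiTwo P θ θ' = -(1/θ) * Real.log S' := by
    rw [condRenyiTwo, condRenyiQ_eq P hP0 _ θ hT.ne']
  rw [hE', hED]
  rcases lt_or_gt_of_ne hθb.2 with hneg | hpos
  · -- θ < 0 : S' ≤ Z ^ (1+θ), and -(1/θ) ≥ 0
    have hp1 : (1:ℝ) ≤ 1 / (1 + θ) := by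
      rw [le_div_iff₀ hT, one_mul]; linarith
    have hjen := Real.arith_mean_le_rpow_mean Finset.univ Q' (fun y => (z y) ^ (1 + θ))
      (fun i _ => hQ'0 i) hQ'sum (fun i _ => Real.rpow_nonneg (hz0 i) _) hp1
    simp only [one_div_one_div] at hjen
    have hz1 : ∀ y : 𝒴, ((z y) ^ (1 + θ)) ^ (1 / (1 + θ)) = z y := fun y => by
      rw [← Real.rpow_mul (hz0 y), (by field_simp : (1 + θ) * (1 / (1 + θ)) = (1:ℝ)),
        Real.rpow_one]
    simp only [hz1] at hjen
    rw [hsum1, hsum2] at hjen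
    have hlog : Real.log S' ≤ Real.log (Z ^ (1 + θ)) := Real.log_le_log hS'pos hjen
    have hc : (0:ℝ) ≤ -(1/θ) := by
      have : 1/θ < 0 := div_neg_of_pos_of_neg one_pos hneg
      linarith
    exact mul_le_mul_of_nonneg_left hlog hc
  · -- θ > 0 : Z ^ (1+θ) ≤ S', and -(1/θ) ≤ 0
    have hjen := Real.rpow_arith_mean_le_arith_mean_rpow Finset.univ Q' z
      (fun i _ => hQ'0 i) hQ'sum (fun i _ => hz0 i) (by linarith : (1:ℝ) ≤ 1 + θ)
    rw [hsum1, hsum2] at hjen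
    have hlog : Real.log (Z ^ (1 + θ)) ≤ Real.log S' :=
      Real.log_le_log (Real.rpow_pos_of_pos hZpos _) hjen
    have hc : -(1/θ) ≤ (0:ℝ) := by
      have : 0 < 1/θ := by positivity
      linarith
    exact mul_le_mul_of_nonpos_left hlog hc
end
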